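/- Let S be a nonempty semigroup such that the set S \ E(S) of non-idempotent elements of S is finite, with cardinality n. Then every S-valued sequence of length n + 1 is not strongly idempotent-product free; that is, every list of n + 1 elements of S contains a nonempty subsequence (order-preserving sublist) whose product, taken in the order of its terms, is an idempotent. -/

import Mathlib

/-- Product, in order, of the nonempty list `a :: l` in a semigroup. -/
def sprod {S : Type*} [Mul S] (a : S) (l : List S) : S := l.foldl (· * ·) a

/-- `pow1 x n = x^(n+1)`: the `(n+1)`-st power of `x` in a semigroup. -/
def pow1 {S : Type*} [Mul S] (x : S) : ℕ → S := fun n => Nat.rec x (fun _ y => y * x) n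

/-- `Π(T)`: the set of products, in order, of nonempty lists which are
permutations of order-preserving sublists of `T`. -/
def PiSet {S : Type*} [Mul S] (T : List S) : Set S :=
  {s | ∃ u : List S, u.Sublist T ∧ ∃ a l, (a :: l).Perm u ∧ sprod a l = s}

/-- `A(L)`: the set of products, in order, of nonempty order-preserving sublists of `L`. -/
def ASet {S : Type*} [Mul S] (L : List S) : Set S :=
  {s | ∃ a l, (a :: l).Sublist L ∧ sprod a l = s}

/-- `HasIndexPeriod x r p` says that `r` is the index of `x` (the least `r > 0` such
that `x^r = x^t` for some positive `t ≠ r`) and `p` is the period of `x` (the least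
`p > 0` with `x^(r+p) = x^r`). Powers are expressed via `pow1 x (n-1) = x^n`. -/
def HasIndexPeriod {S : Type*} [Mul S] (x : S) (r p : ℕ) : Prop :=
  (0 < r ∧ (∃ t, 0 < t ∧ t ≠ r ∧ pow1 x (t - 1) = pow1 x (r - 1)) ∧
    ∀ r', 0 < r' → (∃ t, 0 < t ∧ t ≠ r' ∧ pow1 x (t - 1) = pow1 x (r' - 1)) → r ≤ r') ∧
  (0 < p ∧ pow1 x (r + p - 1) = pow1 x (r - 1) ∧
    ∀ p', 0 < p' → pow1 x (r + p' - 1) = pow1 x (r - 1) → p ≤ p')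

lemma pow1_succ {S : Type*} [Mul S] (x : S) (n : ℕ) : pow1 x (n+1) = pow1 x n * x := rfl

lemma pow1_add {S : Type*} [Semigroup S] (x : S) (a b : ℕ) :
    pow1 x (a + b + 1) = pow1 x a * pow1 x b := by
  induction b with
  | zero => rfl
  | succ b ih =>
      have h : a + (b + 1) + 1 = (a + b + 1) + 1 := by omega
      rw [h, pow1_succ, ih, pow1_succ, mul_assoc]

lemma pow1_single_period {S : Type*} [Semigroup S] (x : S) (a p : ℕ) (hp : 0 < p)
    (h : pow1 x (a + p) = pow1 x a) (d : ℕ) :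
    pow1 x (a + d + p) = pow1 x (a + d) := by
  cases d with
  | zero => simpa using h
  | succ e =>
      have h1 : a + (e + 1) + p = (a + p) + e + 1 := by omega
      rw [h1, pow1_add, h, ← pow1_add]
      congr 1

lemma pow1_period {S : Type*} [Semigroup S] (x : S) (a p : ℕ) (hp : 0 < p)
    (h : pow1 x (a + p) = pow1 x a) (d k : ℕ) :
    pow1 x (a + d + k * p) = pow1 x (a + d) := by
  induction k with
  | zero => simp
  | succ k ih =>
      have h1 : a + d + (k + 1) * p = (a + (d + k * p)) + p := by ring
      rw [h1, pow1_single_period x a p hp h (d + k * p)]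
      have h2 : a + (d + k * p) = a + d + k * p := by omega
      rw [h2, ih]

lemma exists_idem_pow {S : Type*} [Semigroup S] (x : S) (a b : ℕ) (hab : a < b)
    (he : pow1 x a = pow1 x b) :
    ∃ m, pow1 x m * pow1 x m = pow1 x m := by
  set p := b - a with hpdef
  have hp : 0 < p := by omega
  have hper : pow1 x (a + p) = pow1 x a := by
    rw [show a + p = b by omega]; exact he.symm
  have h1 : a + 1 ≤ (a + 1) * p := Nat.le_mul_of_pos_right _ hp
  refine ⟨(a + 1) * p - 1, ?_⟩
  set M := (a + 1) * p - 1 with hMdef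
  have hM : a ≤ M := by omega
  have hidx : M + M + 1 = a + (M - a) + (a + 1) * p := by omega
  rw [← pow1_add, hidx, pow1_period x a p hp hper (M - a) (a + 1)]
  congr 1
  omega


/-- Every sequence of length `|S \ E(S)| + 1` over a nonempty semigroup `S` with
finitely many non-idempotents is not strongly idempotent-product free. -/
theorem stmt_0 {S : Type*} [Semigroup S] [Nonempty S]
    (hfin : {x : S | x * x ≠ x}.Finite)
    (T : List S) (hlen : T.length = {x : S | x * x ≠ x}.ncard + 1) :
    ∃ a l, (a :: l).Sublist T ∧ sprod a l * sprod a l = sprod a l := by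
  by_contra hcon
  push_neg at hcon
  set N := {x : S | x * x ≠ x} with hN
  set n := N.ncard with hn
  set Lset : ℕ → Set S :=
    fun k => {s | ∃ a l, (a :: l).Sublist (T.take k) ∧ sprod a l = s} with hLdef
  have hLN : ∀ k, Lset k ⊆ N := by
    rintro k s ⟨a, l, hsub, rfl⟩
    exact hcon a l (hsub.trans (List.take_sublist k T))
  have hLfin : ∀ k, (Lset k).Finite := fun k => hfin.subset (hLN k)
  have hLmono : ∀ k, Lset k ⊆ Lset (k+1) := by
    rintro k s ⟨a, l, hsub, rfl⟩
    refine ⟨a, l, ?_, rfl⟩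
    refine hsub.trans ?_
    rw [show T.take k = (T.take (k+1)).take k by rw [List.take_take]; congr 1; omega]
    exact List.take_sublist _ _
  have key : ∃ k < n + 1, Lset (k+1) ⊆ Lset k := by
    by_contra hK
    push_neg at hK
    have grow : ∀ k, k ≤ n + 1 → k ≤ (Lset k).ncard := by
      intro k
      induction k with
      | zero => intro _; omega
      | succ k ih =>
          intro hk
          have h1 := ih (by omega)
          have hss : Lset k ⊂ Lset (k+1) := ⟨hLmono k, hK k (by omega)⟩
          have := Set.ncard_lt_ncard hss (hLfin (k+1))
          omega
    have h2 := grow (n+1) le_rfl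
    have h3 := Set.ncard_le_ncard (hLN (n+1)) hfin
    omega
  obtain ⟨k, hk, hstep⟩ := key
  have hkT : k < T.length := by omega
  set t := T.get ⟨k, hkT⟩ with ht
  have htake : T.take (k+1) = T.take k ++ [t] := by
    rw [← List.take_concat_get hkT, List.concat_eq_append, ht]
    rfl
  have htmem : t ∈ Lset k := by
    apply hstep
    exact ⟨t, [], by rw [htake]; exact List.sublist_append_right _ _, rfl⟩
  have hmul : ∀ s ∈ Lset k, s * t ∈ Lset k := by
    rintro s ⟨a, l, hsub, rfl⟩
    apply hstep
    refine ⟨a, l ++ [t], ?_, ?_⟩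
    · rw [htake]
      exact List.Sublist.append hsub (List.Sublist.refl [t])
    · show List.foldl _ a (l ++ [t]) = _
      rw [List.foldl_append]
      rfl
  have hpow : ∀ m, pow1 t m ∈ Lset k := by
    intro m
    induction m with
    | zero => exact htmem
    | succ m ih => exact hmul _ ih
  have hmt : Set.MapsTo (pow1 t) Set.univ (Lset k) := fun m _ => hpow m
  obtain ⟨a, -, b, -, hab, heq⟩ :=
    Set.infinite_univ.exists_ne_map_eq_of_mapsTo hmt (hLfin k)
  have hcoll : ∃ a b, a < b ∧ pow1 t a = pow1 t b := by
    rcases lt_or_gt_of_ne hab with h | h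
    exacts [⟨a, b, h, heq⟩, ⟨b, a, h, heq.symm⟩]
  obtain ⟨a', b', hab', he'⟩ := hcoll
  obtain ⟨m, hm⟩ := exists_idem_pow t a' b' hab' he'
  exact hLN k (hpow m) hm
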